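/- Let a > 0, 0 < α < b, c ∈ (0,1). Then the function v ↦ (1/(1+|v|)) · ( (v² + (b−α)²) / (v²c² + (b−αc)²) )^{−a/2} is not integrable on ℝ, i.e. ∫_ℝ (1/(1+|v|)) · ( (v² + (b−α)²) / (v²c² + (b−αc)²) )^{−a/2} dv = ∞. -/
import Mathlib


open MeasureTheory Real Set

/-- Failure of the integrability condition in the gamma-OU case:
`∫_ℝ (1/(1+|v|)) ((v²+(b−α)²)/(v²c²+(b−αc)²))^{−a/2} dv = ∞`. -/
theorem stmt10 (a b α : ℝ) (ha : 0 < a) (hα : 0 < α) (hαb : α < b)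
    (c : ℝ) (hc : c ∈ Set.Ioo (0 : ℝ) 1) :
    ∫⁻ v : ℝ, ENNReal.ofReal
        ((1 / (1 + |v|)) *
          ((v ^ 2 + (b - α) ^ 2) / (v ^ 2 * c ^ 2 + (b - α * c) ^ 2)) ^ (-(a / 2)))
      = ⊤ := by
  obtain ⟨hc0, hc1⟩ := hc
  set f : ℝ → ℝ := fun v =>
    (1 / (1 + |v|)) *
      ((v ^ 2 + (b - α) ^ 2) / (v ^ 2 * c ^ 2 + (b - α * c) ^ 2)) ^ (-(a / 2)) with hf
  have hA : 0 < b - α := by linarith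
  have hB : 0 < b - α * c := by nlinarith
  set K : ℝ := max (c ^ 2)⁻¹ ((b - α) ^ 2 / (b - α * c) ^ 2) with hK
  have hK0 : 0 < K := lt_max_of_lt_left (by positivity)
  -- denominator and numerator positivity, and ratio bound
  have hden : ∀ v : ℝ, 0 < v ^ 2 * c ^ 2 + (b - α * c) ^ 2 := fun v => by positivity
  have hnum : ∀ v : ℝ, 0 < v ^ 2 + (b - α) ^ 2 := fun v => by positivity
  have hratio_pos : ∀ v : ℝ,
      0 < (v ^ 2 + (b - α) ^ 2) / (v ^ 2 * c ^ 2 + (b - α * c) ^ 2) :=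
    fun v => div_pos (hnum v) (hden v)
  have hratio_le : ∀ v : ℝ,
      (v ^ 2 + (b - α) ^ 2) / (v ^ 2 * c ^ 2 + (b - α * c) ^ 2) ≤ K := by
    intro v
    rw [div_le_iff₀ (hden v)]
    have h1 : v ^ 2 ≤ K * (v ^ 2 * c ^ 2) := by
      have : (c ^ 2)⁻¹ ≤ K := le_max_left _ _
      have hc2 : 0 < c ^ 2 := by positivity
      calc v ^ 2 = (c ^ 2)⁻¹ * (v ^ 2 * c ^ 2) := by field_simp
        _ ≤ K * (v ^ 2 * c ^ 2) := by
            apply mul_le_mul_of_nonneg_right this (by positivity)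
    have h2 : (b - α) ^ 2 ≤ K * (b - α * c) ^ 2 := by
      have hle : (b - α) ^ 2 / (b - α * c) ^ 2 ≤ K := le_max_right _ _
      have hB2 : 0 < (b - α * c) ^ 2 := by positivity
      calc (b - α) ^ 2 = ((b - α) ^ 2 / (b - α * c) ^ 2) * (b - α * c) ^ 2 := by
            field_simp
        _ ≤ K * (b - α * c) ^ 2 := mul_le_mul_of_nonneg_right hle hB2.le
    nlinarith [h1, h2]
  set ε : ℝ := K ^ (-(a / 2)) with hε
  have hε0 : 0 < ε := Real.rpow_pos_of_pos hK0 _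
  -- pointwise lower bound for the rpow factor
  have hrpow_ge : ∀ v : ℝ,
      ε ≤ ((v ^ 2 + (b - α) ^ 2) / (v ^ 2 * c ^ 2 + (b - α * c) ^ 2)) ^ (-(a / 2)) :=
    fun v => Real.rpow_le_rpow_of_nonpos (hratio_pos v) (hratio_le v)
      (by simp; positivity)
  have hfnonneg : ∀ v : ℝ, 0 ≤ f v := by
    intro v
    apply mul_nonneg (by positivity)
    exact Real.rpow_nonneg (hratio_pos v).le _
  -- measurability of f
  have hfm : Measurable f := by
    apply Continuous.measurable
    apply Continuous.mul
    · exact Continuous.div continuous_const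
        (continuous_const.add _root_.continuous_abs) (fun v => by positivity)
    · apply Continuous.rpow_const
      · exact Continuous.div ((continuous_pow 2).add continuous_const)
          (((continuous_pow 2).mul continuous_const).add continuous_const)
          (fun v => (hden v).ne')
      · exact fun v => Or.inl (hratio_pos v).ne'
  by_contra h
  have hfin : HasFiniteIntegral f := by
    rw [hasFiniteIntegral_iff_ofReal (Filter.Eventually.of_forall hfnonneg)]
    exact lt_top_iff_ne_top.mpr h
  have hint : Integrable f := ⟨hfm.aestronglyMeasurable, hfin⟩
  -- deduce integrability of x⁻¹ on Ioi 1
  have hIoi : IntegrableOn (fun x : ℝ => x⁻¹) (Ioi (1 : ℝ)) := by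
    have hg : IntegrableOn (fun v => (2 / ε) * f v) (Ioi (1 : ℝ)) :=
      (hint.const_mul _).integrableOn
    apply hg.mono' measurable_inv.aestronglyMeasurable
    filter_upwards [ae_restrict_mem measurableSet_Ioi] with x hx
    have hx1 : (1 : ℝ) < x := hx
    have hx0 : 0 < x := by linarith
    rw [Real.norm_eq_abs, abs_of_pos (inv_pos.mpr hx0)]
    have h1 : 1 / (1 + |x|) ≥ 1 / (2 * x) := by
      rw [abs_of_pos hx0]
      apply one_div_le_one_div_of_le (by positivity) (by linarith)
    have h2 : ε * (1 / (2 * x)) ≤ f x := by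
      calc ε * (1 / (2 * x)) ≤ ε * (1 / (1 + |x|)) := by
            apply mul_le_mul_of_nonneg_left h1 hε0.le
        _ ≤ (1 / (1 + |x|)) *
              ((x ^ 2 + (b - α) ^ 2) / (x ^ 2 * c ^ 2 + (b - α * c) ^ 2)) ^ (-(a / 2)) := by
            rw [mul_comm]
            apply mul_le_mul_of_nonneg_left (hrpow_ge x) (by positivity)
    calc x⁻¹ = (2 / ε) * (ε * (1 / (2 * x))) := by field_simp
      _ ≤ (2 / ε) * f x := by
          apply mul_le_mul_of_nonneg_left h2 (by positivity)
  have h2 : IntegrableOn (fun x : ℝ => x ^ (-1 : ℝ)) (Ioi 1) :=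
    hIoi.congr_fun (fun x hx => (Real.rpow_neg_one x).symm) measurableSet_Ioi
  rw [integrableOn_Ioi_rpow_iff zero_lt_one] at h2
  linarith
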